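/- Let n ≥ 1 be an integer and let k be a real number with k ≥ n − 1 and k ≥ 0. Let (M, μ) be a finite measure space and H : M → [0, ∞) be measurable with ∫_M H^n dμ ≥ n^n (n+1) ω_{n+1}. Then ∫_M H^k dμ ≤ (1/n) ((n+1) ω_{n+1})^{−1/n} · (μ(M))^{1/n} · ∫_M H^{k+1} dμ. -/

import Mathlib

open MeasureTheory Metric

lemma lintegral_rpow_le_rpow_mul_rpow {M : Type*} [MeasurableSpace M] (μ : Measure M)
    {f : M → ENNReal} (hf : Measurable f) {a b : ℝ} (ha : 0 ≤ a) (hab : a ≤ b) :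
    ∫⁻ x, f x ^ a ∂μ ≤ (∫⁻ x, f x ^ b ∂μ) ^ (a / b) * (μ Set.univ) ^ (1 - a / b) := by
  rcases eq_or_lt_of_le ha with rfl | ha
  · simp [lintegral_const]
  rcases eq_or_lt_of_le hab with rfl | hab
  · rw [div_self ha.ne', ENNReal.rpow_one]; simp
  have hb : 0 < b := ha.trans hab
  have hpq : (b / a).HolderConjugate (b / (b - a)) := by
    constructor
    · rw [inv_div, inv_div, ← add_div, add_sub_cancel, div_self hb.ne', inv_one]
    · exact div_pos hb ha
    · exact div_pos hb (by linarith)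
  calc ∫⁻ x, f x ^ a ∂μ = ∫⁻ x, (f x ^ a) * (fun (_ : M) => (1:ENNReal)) x ∂μ := by simp
    _ ≤ (∫⁻ x, (f x ^ a) ^ (b / a) ∂μ) ^ (1 / (b / a)) * (∫⁻ x, (1:ENNReal) ^ (b / (b - a)) ∂μ) ^ (1 / (b / (b - a))) := by
        exact ENNReal.lintegral_mul_le_Lp_mul_Lq μ hpq (hf.pow_const _).aemeasurable aemeasurable_const
    _ = (∫⁻ x, f x ^ b ∂μ) ^ (a / b) * (μ Set.univ) ^ (1 - a / b) := by
        rw [one_div_div, one_div_div]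
        congr 1
        · congr 1
          · refine lintegral_congr fun x => ?_
            rw [← ENNReal.rpow_mul, mul_div_cancel₀ _ ha.ne']
        · simp only [ENNReal.one_rpow, lintegral_one]
          congr 1
          field_simp

/-- **The key Hölder-inequality step** (from (2.3)–(2.4), the monotonicity of the
isoperimetric difference): let `n ≥ 1` be an integer, `k ≥ max(n−1, 0)` real, `(M, μ)` a
finite measure space and `H : M → [0,∞)` measurable with
`∫ H^n dμ ≥ n^n (n+1) ω_{n+1}`, where `ω_{n+1}` is the Lebesgue volume of the unit ball
in `ℝ^{n+1}`. Then `∫ H^k dμ ≤ (1/n)((n+1)ω_{n+1})^{−1/n} μ(M)^{1/n} ∫ H^{k+1} dμ`. -/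
theorem holder_isoperimetric_step (n : ℕ) (hn : 1 ≤ n) (k : ℝ)
    (hk0 : 0 ≤ k) (hk1 : (n : ℝ) - 1 ≤ k)
    {M : Type*} [MeasurableSpace M] (μ : Measure M) [IsFiniteMeasure μ]
    (H : M → ℝ) (hH : Measurable H) (hHnn : ∀ x, 0 ≤ H x)
    (hlow : ENNReal.ofReal ((n : ℝ) ^ n * ((n : ℝ) + 1) *
        (volume (ball (0 : EuclideanSpace ℝ (Fin (n + 1))) 1)).toReal)
      ≤ ∫⁻ x, ENNReal.ofReal (H x ^ (n : ℝ)) ∂μ) :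
    ∫⁻ x, ENNReal.ofReal (H x ^ k) ∂μ
      ≤ ENNReal.ofReal ((1 / (n : ℝ)) *
            (((n : ℝ) + 1) *
              (volume (ball (0 : EuclideanSpace ℝ (Fin (n + 1))) 1)).toReal) ^ (-(1 : ℝ) / n))
          * (μ Set.univ) ^ ((1 : ℝ) / n)
          * ∫⁻ x, ENNReal.ofReal (H x ^ (k + 1)) ∂μ := by
  have hnR : (0:ℝ) < n := by exact_mod_cast hn
  set f : M → ENNReal := fun x => ENNReal.ofReal (H x) with hf
  have hfm : Measurable f := ENNReal.measurable_ofReal.comp hH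
  have hrw : ∀ (p : ℝ), 0 ≤ p →
      ∫⁻ x, ENNReal.ofReal (H x ^ p) ∂μ = ∫⁻ x, f x ^ p ∂μ := fun p hp =>
    lintegral_congr fun x => (ENNReal.ofReal_rpow_of_nonneg (hHnn x) hp).symm
  -- positivity of the volume constant
  set w : ℝ := (volume (ball (0 : EuclideanSpace ℝ (Fin (n + 1))) 1)).toReal with hw
  have hwpos : 0 < w := ENNReal.toReal_pos (measure_ball_pos volume _ one_pos).ne'
    measure_ball_lt_top.ne
  have hcpos : (0:ℝ) < (n : ℝ) ^ n * ((n : ℝ) + 1) * w := by positivity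
  rw [hrw k hk0, hrw (k+1) (by linarith)]
  rw [hrw (n:ℝ) (by positivity)] at hlow
  set C : ENNReal := ENNReal.ofReal ((n : ℝ) ^ n * ((n : ℝ) + 1) * w) with hC
  set V : ENNReal := μ Set.univ with hV
  set I : ENNReal := ∫⁻ x, f x ^ (k+1) ∂μ with hI
  have hVtop : V ≠ ⊤ := (measure_lt_top μ _).ne
  have hC0 : C ≠ 0 := by simp [hC, not_le.mpr hcpos, ENNReal.ofReal_eq_zero]
  have hV0 : V ≠ 0 := by
    intro h
    have : μ = 0 := Measure.measure_univ_eq_zero.mp h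
    rw [this, lintegral_zero_measure] at hlow
    exact hC0 (le_antisymm hlow bot_le)
  have hnk : (n:ℝ) ≤ k + 1 := by linarith
  -- Hölder inequality (B) for exponent n ≤ k+1
  have hB : C ≤ I ^ ((n:ℝ) / (k+1)) * V ^ (1 - (n:ℝ) / (k+1)) :=
    hlow.trans (lintegral_rpow_le_rpow_mul_rpow μ hfm (by positivity) hnk)
  by_cases hItop : I = ⊤
  · rw [hItop, ENNReal.mul_top (mul_ne_zero
      (ENNReal.ofReal_pos.mpr (by positivity)).ne'
      (by simp [ENNReal.rpow_eq_zero_iff, hV0, hVtop]))]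
    exact le_top
  -- now I ≠ ⊤
  have hI0 : I ≠ 0 := by
    intro h
    rw [h, ENNReal.zero_rpow_of_pos (by positivity), zero_mul] at hB
    exact hC0 (le_antisymm hB bot_le)
  -- Hölder inequality (A) for exponent k ≤ k+1
  have hA : ∫⁻ x, f x ^ k ∂μ ≤ I ^ (k / (k+1)) * V ^ (1 - k / (k+1)) :=
    lintegral_rpow_le_rpow_mul_rpow μ hfm hk0 (by linarith)
  have hk1pos : (0:ℝ) < k + 1 := by linarith
  -- raise hB to the power 1/n
  have h1 : C ^ ((1:ℝ)/n) ≤ I ^ ((1:ℝ)/(k+1)) * V ^ ((1 - (n:ℝ)/(k+1))/n) := by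
    have := ENNReal.rpow_le_rpow hB (by positivity : (0:ℝ) ≤ 1/n)
    rwa [ENNReal.mul_rpow_of_nonneg _ _ (by positivity), ← ENNReal.rpow_mul,
      ← ENNReal.rpow_mul, show (n:ℝ)/(k+1) * (1/n) = 1/(k+1) by field_simp,
      show (1 - (n:ℝ)/(k+1)) * (1/n) = (1 - (n:ℝ)/(k+1))/n by ring] at this
  -- key multiplicative estimate
  have hkey : (∫⁻ x, f x ^ k ∂μ) * C ^ ((1:ℝ)/n) ≤ I * V ^ ((1:ℝ)/n) := by
    calc (∫⁻ x, f x ^ k ∂μ) * C ^ ((1:ℝ)/n)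
        ≤ (I ^ (k / (k+1)) * V ^ (1 - k / (k+1))) * (I ^ ((1:ℝ)/(k+1)) * V ^ ((1 - (n:ℝ)/(k+1))/n)) :=
          mul_le_mul' hA h1
      _ = (I ^ (k / (k+1)) * I ^ ((1:ℝ)/(k+1))) * (V ^ (1 - k / (k+1)) * V ^ ((1 - (n:ℝ)/(k+1))/n)) := by
          ring
      _ = I * V ^ ((1:ℝ)/n) := by
          rw [← ENNReal.rpow_add _ _ hI0 hItop, ← ENNReal.rpow_add _ _ hV0 hVtop,
            show k/(k+1) + 1/(k+1) = 1 by field_simp,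
            show (1 - k/(k+1)) + (1 - (n:ℝ)/(k+1))/n = 1/n by field_simp; ring,
            ENNReal.rpow_one]
  -- the coefficient is (C^{1/n})⁻¹
  have hCn0 : C ^ ((1:ℝ)/n) ≠ 0 := by
    simp [ENNReal.rpow_eq_zero_iff, hC0, ENNReal.ofReal_ne_top, hC, not_le.mpr hcpos]
  have hCntop : C ^ ((1:ℝ)/n) ≠ ⊤ := by
    simp [ENNReal.rpow_eq_top_iff, hC0, ENNReal.ofReal_ne_top, hC]
  have hreal : ((n:ℝ)^n * ((n:ℝ)+1) * w) ^ (-(1/(n:ℝ))) =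
      1/(n:ℝ) * (((n:ℝ)+1)*w) ^ (-(1:ℝ)/n) := by
    rw [mul_assoc, Real.mul_rpow (by positivity) (by positivity)]
    congr 1
    · rw [← Real.rpow_natCast (n:ℝ) n, ← Real.rpow_mul hnR.le,
        show (n:ℝ) * -(1/(n:ℝ)) = -1 by field_simp, Real.rpow_neg_one, one_div]
    · rw [neg_div]
  have hcoef : ENNReal.ofReal ((1 / (n : ℝ)) * (((n : ℝ) + 1) * w) ^ (-(1 : ℝ) / n))
      = (C ^ ((1:ℝ)/n))⁻¹ := by
    rw [← ENNReal.rpow_neg, hC, ENNReal.ofReal_rpow_of_pos hcpos, hreal]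
  rw [hcoef]
  have hfin := (ENNReal.le_div_iff_mul_le (Or.inl hCn0) (Or.inl hCntop)).mpr hkey
  refine hfin.trans_eq ?_
  rw [ENNReal.div_eq_inv_mul]
  ring
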